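/- In the exterior algebra on n generators (n ≥ 2), for each k ≥ 1 there exist nonzero rational constants a and a' such that a·F_{2k} = (F_2)^k and a'·F_{2k+1} = (F_2)^k · F_1. Consequently, the two-sided ideal generated by {F_r : 1 ≤ r ≤ n} equals the two-sided ideal generated by F_1 and F_2. -/

import Mathlib

open ExteriorAlgebra

/-- The generator `θ_i` of the exterior algebra `Λ(ℚ^n)`. -/
noncomputable def theta (n : ℕ) (i : Fin n) : ExteriorAlgebra ℚ (Fin n → ℚ) :=
  ExteriorAlgebra.ι ℚ (Pi.single i (1 : ℚ))

/-- For `A = {a_1 < a_2 < ⋯ < a_k} ⊆ [n]`, the monomial `θ_A = θ_{a_1} θ_{a_2} ⋯ θ_{a_k}`. -/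
noncomputable def thetaA (n : ℕ) (A : Finset (Fin n)) : ExteriorAlgebra ℚ (Fin n → ℚ) :=
  ((A.sort (· ≤ ·)).map (theta n)).prod

/-- The fundamental quasisymmetric invariant `F_{1^r} = Σ_{A ⊆ [n], |A| = r} θ_A`. -/
noncomputable def Fq (n r : ℕ) : ExteriorAlgebra ℚ (Fin n → ℚ) :=
  ∑ A ∈ Finset.powersetCard r (Finset.univ : Finset (Fin n)), thetaA n A
noncomputable def thetaL (n : ℕ) (l : List (Fin n)) : ExteriorAlgebra ℚ (Fin n → ℚ) :=
  (l.map (theta n)).prod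

lemma theta_sq (n : ℕ) (i : Fin n) : theta n i * theta n i = 0 := ι_sq_zero _

lemma theta_swap (n : ℕ) (i j : Fin n) :
    theta n i * theta n j = - (theta n j * theta n i) := by
  have := ExteriorAlgebra.ι_add_mul_swap (R := ℚ) (M := Fin n → ℚ) (Pi.single i (1:ℚ)) (Pi.single j 1)
  unfold theta
  exact eq_neg_of_add_eq_zero_left this

@[simp] lemma thetaL_nil (n : ℕ) : thetaL n [] = 1 := rfl

@[simp] lemma thetaL_cons (n : ℕ) (a : Fin n) (l : List (Fin n)) :
    thetaL n (a :: l) = theta n a * thetaL n l := by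
  simp [thetaL]

lemma thetaL_mul_theta (n : ℕ) (l : List (Fin n)) (i : Fin n) :
    thetaL n l * theta n i = (-1 : ℚ)^l.length • (theta n i * thetaL n l) := by
  induction l with
  | nil => simp
  | cons a t ih =>
    rw [thetaL_cons, mul_assoc, ih, List.length_cons, pow_succ, mul_smul_comm,
      ← mul_assoc, theta_swap n a i]
    rw [neg_mul, mul_assoc, smul_neg, mul_comm ((-1:ℚ)^t.length) (-1), mul_smul, neg_one_smul]

lemma thetaL_mul_theta_mem (n : ℕ) (l : List (Fin n)) (i : Fin n) (h : i ∈ l) :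
    thetaL n l * theta n i = 0 := by
  induction l with
  | nil => simp at h
  | cons a t ih =>
    rw [thetaL_cons, mul_assoc]
    by_cases ht : i ∈ t
    · rw [ih ht, mul_zero]
    · have hia : i = a := by
        rcases List.mem_cons.mp h with h' | h'
        · exact h'
        · exact absurd h' ht
      subst hia
      rw [thetaL_mul_theta n t i, mul_smul_comm, ← mul_assoc, theta_sq, zero_mul, smul_zero]

lemma thetaL_mul_theta_sorted (n : ℕ) (l : List (Fin n)) (i : Fin n)
    (hs : l.Pairwise (· < ·)) (h : i ∉ l) :
    thetaL n l * theta n i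
      = (-1 : ℚ) ^ (l.filter (fun a => i < a)).length • thetaL n (l.orderedInsert (· ≤ ·) i) := by
  induction l with
  | nil => simp [List.orderedInsert]
  | cons a t ih =>
    have hia : i ≠ a := fun h' => h (h' ▸ List.mem_cons_self (a := a) (l := t))
    rcases lt_or_gt_of_ne hia with hlt | hgt
    · -- i < a : orderedInsert puts i in front
      have h1 : (a :: t).orderedInsert (· ≤ ·) i = i :: a :: t := by
        simp [List.orderedInsert, le_of_lt hlt]
      have h2 : (a :: t).filter (fun x => i < x) = a :: t := by
        rw [List.filter_eq_self]
        intro b hb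
        have : a ≤ b := by
          rcases List.mem_cons.mp hb with rfl | hb'
          · exact le_refl _
          · exact le_of_lt ((List.pairwise_cons.mp hs).1 b hb')
        simpa using lt_of_lt_of_le hlt this
      rw [h1, h2, thetaL_mul_theta, thetaL_cons]
      norm_num
    · -- a < i
      have h1 : (a :: t).orderedInsert (· ≤ ·) i = a :: t.orderedInsert (· ≤ ·) i := by
        simp [List.orderedInsert, not_le.mpr hgt]
      have h2 : (a :: t).filter (fun x => i < x) = t.filter (fun x => i < x) := by
        rw [List.filter_cons_of_neg]
        simp [not_lt.mpr (le_of_lt hgt)]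
      rw [h1, h2, thetaL_cons, mul_assoc, ih (List.pairwise_cons.mp hs).2
        (fun h' => h (List.mem_cons_of_mem a h')), thetaL_cons, mul_smul_comm]

lemma sort_insert_eq (n : ℕ) (A : Finset (Fin n)) (i : Fin n) (h : i ∉ A) :
    (insert i A).sort (· ≤ ·) = (A.sort (· ≤ ·)).orderedInsert (· ≤ ·) i := by
  refine List.Perm.eq_of_pairwise' (Finset.pairwise_sort _ _)
    ((Finset.pairwise_sort A _).orderedInsert i _) ?_
  refine Multiset.coe_eq_coe.mp ?_ |>.trans (List.perm_orderedInsert _ i _).symm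
  rw [Finset.sort_eq]
  show (insert i A).val = ↑(i :: A.sort (· ≤ ·))
  rw [Finset.insert_val_of_notMem h, ← Multiset.cons_coe, Finset.sort_eq]


lemma filter_sort_length (n : ℕ) (A : Finset (Fin n)) (i : Fin n) :
    ((A.sort (· ≤ ·)).filter (fun a => i < a)).length
      = (A.filter (fun a => i < a)).card := by
  rw [Finset.card_def, Finset.filter_val, ← Finset.sort_eq A (· ≤ ·), Multiset.filter_coe,
    Multiset.coe_card]


lemma thetaA_eq_thetaL (n : ℕ) (A : Finset (Fin n)) :
    thetaA n A = thetaL n (A.sort (· ≤ ·)) := rfl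

@[simp] lemma thetaA_empty (n : ℕ) : thetaA n ∅ = 1 := by
  simp [thetaA]

@[simp] lemma thetaA_singleton (n : ℕ) (i : Fin n) : thetaA n {i} = theta n i := by
  simp [thetaA, Finset.sort_singleton]

lemma thetaA_mul_theta_mem (n : ℕ) (A : Finset (Fin n)) (i : Fin n) (h : i ∈ A) :
    thetaA n A * theta n i = 0 :=
  thetaL_mul_theta_mem n _ i ((Finset.mem_sort _).mpr h)

lemma thetaA_mul_theta (n : ℕ) (A : Finset (Fin n)) (i : Fin n) (h : i ∉ A) :
    thetaA n A * theta n i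
      = (-1 : ℚ) ^ ((A.filter (fun a => i < a)).card) • thetaA n (insert i A) := by
  rw [thetaA_eq_thetaL, thetaA_eq_thetaL, sort_insert_eq n A i h, ← filter_sort_length]
  exact thetaL_mul_theta_sorted n _ i (Finset.sortedLT_sort A).pairwise
    (fun h' => h ((Finset.mem_sort _).mp h'))

lemma thetaA_pair (n : ℕ) (p q : Fin n) (h : p < q) :
    thetaA n {p, q} = theta n p * theta n q := by
  have hq : q ∉ ({p} : Finset (Fin n)) := by simp [ne_of_gt h]
  have := thetaA_mul_theta n {p} q hq
  rw [thetaA_singleton] at this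
  have hf : ({p} : Finset (Fin n)).filter (fun a => q < a) = ∅ := by
    ext a; simp; rintro rfl; exact le_of_lt h
  rw [hf] at this
  simp at this
  rw [Finset.pair_comm, ← this]

lemma sign_sum_one {n : ℕ} (B : Finset (Fin n)) :
    ∑ i ∈ B, (-1 : ℚ) ^ ((B.filter (fun a => i < a)).card)
      = if Even B.card then 0 else 1 := by
  induction B using Finset.induction_on_max with
  | empty => simp
  | insert a s ha ih =>
    have has : a ∉ s := fun h => lt_irrefl a (ha a h)
    rw [Finset.sum_insert has]
    have h1 : (insert a s).filter (fun x => a < x) = ∅ := by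
      ext x
      simp only [Finset.mem_filter, Finset.mem_insert, Finset.notMem_empty, iff_false]
      rintro ⟨rfl | hx, hlt⟩
      · exact lt_irrefl _ hlt
      · exact absurd hlt (not_lt.mpr (le_of_lt (ha x ‹_›)))
    have h2 : ∀ i ∈ s, ((insert a s).filter (fun x => i < x)).card
        = (s.filter (fun x => i < x)).card + 1 := by
      intro i hi
      rw [Finset.filter_insert, if_pos (ha i hi), Finset.card_insert_of_notMem
        (fun h => has (Finset.mem_filter.mp h).1)]
    rw [h1, Finset.sum_congr rfl (fun i hi => by rw [h2 i hi])]
    simp only [Finset.card_empty, pow_zero, pow_succ, ← Finset.sum_mul, ih,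
      Finset.card_insert_of_notMem has, Nat.even_add_one]
    by_cases h : Even s.card <;> simp [h]

lemma sign_sum_two {n : ℕ} (B : Finset (Fin n)) :
    ∑ p ∈ B, ∑ q ∈ B.filter (fun q => p < q),
      (-1 : ℚ) ^ ((((B.erase p).erase q).filter (fun x => p < x)).card
        + (((B.erase p).erase q).filter (fun x => q < x)).card)
      = ((B.card / 2 : ℕ) : ℚ) := by
  induction B using Finset.induction_on_max with
  | empty => simp
  | insert a s ha ih =>
    have has : a ∉ s := fun h => lt_irrefl a (ha a h)
    rw [Finset.sum_insert has]
    have h1 : (insert a s).filter (fun q => a < q) = ∅ := by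
      ext x
      simp only [Finset.mem_filter, Finset.mem_insert, Finset.notMem_empty, iff_false]
      rintro ⟨rfl | hx, hlt⟩
      · exact lt_irrefl _ hlt
      · exact absurd hlt (not_lt.mpr (le_of_lt (ha x ‹_›)))
    rw [h1, Finset.sum_empty, zero_add]
    have key : ∀ p ∈ s, ∑ q ∈ (insert a s).filter (fun q => p < q),
        (-1:ℚ) ^ (((((insert a s).erase p).erase q).filter (fun x => p < x)).card
          + ((((insert a s).erase p).erase q).filter (fun x => q < x)).card)
        = (-1:ℚ) ^ ((s.filter (fun x => p < x)).card)
          + ∑ q ∈ s.filter (fun q => p < q),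
            (-1:ℚ) ^ ((((s.erase p).erase q).filter (fun x => p < x)).card
              + (((s.erase p).erase q).filter (fun x => q < x)).card) := by
      intro p hp
      have hpa : p < a := ha p hp
      have hfa : (insert a s).filter (fun q => p < q)
          = insert a (s.filter (fun q => p < q)) := by
        rw [Finset.filter_insert, if_pos hpa]
      have hanotin : a ∉ s.filter (fun q => p < q) := fun h => has (Finset.mem_filter.mp h).1
      rw [hfa, Finset.sum_insert hanotin]
      congr 1
      · -- q = a term
        have hE : ((insert a s).erase p).erase a = s.erase p := by
          rw [Finset.erase_right_comm, Finset.erase_insert has]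
        rw [hE]
        have e1 : (s.erase p).filter (fun x => a < x) = ∅ := by
          ext x
          simp only [Finset.mem_filter, Finset.mem_erase, Finset.notMem_empty, iff_false]
          rintro ⟨⟨hxp, hxs⟩, hlt⟩
          exact absurd hlt (not_lt.mpr (le_of_lt (ha x hxs)))
        have e2 : (s.erase p).filter (fun x => p < x) = s.filter (fun x => p < x) := by
          ext x
          simp only [Finset.mem_filter, Finset.mem_erase]
          constructor
          · rintro ⟨⟨_, hxs⟩, h⟩; exact ⟨hxs, h⟩
          · rintro ⟨hxs, h⟩; exact ⟨⟨ne_of_gt h, hxs⟩, h⟩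
        rw [e1, e2]
        simp
      · apply Finset.sum_congr rfl
        intro q hq
        obtain ⟨hqs, hpq⟩ := Finset.mem_filter.mp hq
        have hqa : q < a := ha q hqs
        have hE : ((insert a s).erase p).erase q = insert a ((s.erase p).erase q) := by
          rw [Finset.erase_insert_of_ne (ne_of_gt hpa), Finset.erase_insert_of_ne (ne_of_gt hqa)]
        have hsub : ∀ x ∈ (s.erase p).erase q, x ∈ s := fun x hx =>
          Finset.mem_of_mem_erase (Finset.mem_of_mem_erase hx)
        have hno : a ∉ (s.erase p).erase q := fun h => has (hsub a h)
        have f1 : ∀ r : Fin n, r < a →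
            ((insert a ((s.erase p).erase q)).filter (fun x => r < x)).card
            = (((s.erase p).erase q).filter (fun x => r < x)).card + 1 := by
          intro r hr
          rw [Finset.filter_insert, if_pos hr, Finset.card_insert_of_notMem
            (fun h => hno (Finset.mem_filter.mp h).1)]
        rw [hE, f1 p hpa, f1 q hqa]
        ring
    rw [Finset.sum_congr rfl key, Finset.sum_add_distrib, ih, sign_sum_one s,
      Finset.card_insert_of_notMem has]
    have harith : ((s.card + 1) / 2 : ℕ) = (if Even s.card then 0 else 1) + s.card / 2 := by
      rcases Nat.even_or_odd s.card with h | h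
      · obtain ⟨t, ht⟩ := h
        simp [ht]
        omega
      · obtain ⟨t, ht⟩ := h
        have : ¬ Even s.card := by simp [ht, parity_simps]
        simp [this, ht]
        omega
    rw [harith]
    push_cast
    split <;> simp

lemma Fq_zero (n : ℕ) : Fq n 0 = 1 := by
  simp [Fq, Finset.powersetCard_zero]

lemma Fq_one (n : ℕ) : Fq n 1 = ∑ i : Fin n, theta n i := by
  rw [Fq]
  rw [Finset.powersetCard_one]
  rw [Finset.sum_map]
  simp


lemma Fq_two (n : ℕ) :
    Fq n 2 = ∑ p : Fin n, ∑ q ∈ Finset.univ.filter (fun q => p < q),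
      theta n p * theta n q := by
  have hs : ∑ x ∈ Finset.univ.sigma (fun p : Fin n => Finset.univ.filter (fun q => p < q)),
      theta n x.1 * theta n x.2
      = ∑ p : Fin n, ∑ q ∈ Finset.univ.filter (fun q => p < q), theta n p * theta n q :=
    Finset.sum_sigma _ _ _
  rw [Fq, ← hs]
  symm
  apply Finset.sum_bij (i := fun (x : Σ _ : Fin n, Fin n) _ => ({x.1, x.2} : Finset (Fin n)))
  · rintro ⟨p, q⟩ hx
    simp only [Finset.mem_sigma, Finset.mem_filter, Finset.mem_univ, true_and] at hx
    simp only [Finset.mem_powersetCard_univ]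
    exact Finset.card_pair (ne_of_lt hx)
  · rintro ⟨p, q⟩ hx ⟨p', q'⟩ hx' h
    simp only [Finset.mem_sigma, Finset.mem_filter, Finset.mem_univ, true_and] at hx hx'
    have hp : p = p' := by
      have h1 : p ∈ ({p', q'} : Finset (Fin n)) := h ▸ Finset.mem_insert_self p {q}
      have h2 : p' ∈ ({p, q} : Finset (Fin n)) := h ▸ Finset.mem_insert_self p' {q'}
      simp only [Finset.mem_insert, Finset.mem_singleton] at h1 h2
      rcases h1 with rfl | rfl
      · rfl
      · rcases h2 with rfl | rfl
        · rfl
        · exact absurd hx (not_lt.mpr (le_of_lt hx'))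
    subst hp
    have hq : q = q' := by
      have h1 : q ∈ ({p, q'} : Finset (Fin n)) := h ▸ (by simp : q ∈ ({p, q} : Finset (Fin n)))
      simp only [Finset.mem_insert, Finset.mem_singleton] at h1
      rcases h1 with rfl | rfl
      · exact absurd hx (lt_irrefl _)
      · rfl
    simp [hq]
  · intro A hA
    rw [Finset.mem_powersetCard_univ] at hA
    obtain ⟨p, q, hne, rfl⟩ := Finset.card_eq_two.mp hA
    rcases lt_or_gt_of_ne hne with hlt | hgt
    · exact ⟨⟨p, q⟩, by simp [hlt], by simp⟩
    · exact ⟨⟨q, p⟩, by simp [hgt], by simp [Finset.pair_comm q p]⟩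
  · rintro ⟨p, q⟩ hx
    simp only [Finset.mem_sigma, Finset.mem_filter, Finset.mem_univ, true_and] at hx
    exact (thetaA_pair n p q hx).symm

lemma filter_erase_lt {n : ℕ} (B : Finset (Fin n)) (i : Fin n) :
    (B.erase i).filter (fun a => i < a) = B.filter (fun a => i < a) := by
  ext x
  simp only [Finset.mem_filter, Finset.mem_erase]
  constructor
  · rintro ⟨⟨_, h⟩, h2⟩; exact ⟨h, h2⟩
  · rintro ⟨h, h2⟩; exact ⟨⟨ne_of_gt h2, h⟩, h2⟩

lemma Fq_mul_one (n m : ℕ) :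
    Fq n m * Fq n 1 = (if Even (m + 1) then (0:ℚ) else 1) • Fq n (m + 1) := by
  rw [Fq, Fq_one, Finset.sum_mul]
  have step1 : ∀ A ∈ Finset.powersetCard m (Finset.univ : Finset (Fin n)),
      thetaA n A * (∑ i : Fin n, theta n i)
      = ∑ i ∈ Aᶜ, (-1:ℚ) ^ ((A.filter (fun a => i < a)).card) • thetaA n (insert i A) := by
    intro A _
    rw [Finset.mul_sum]
    rw [← Finset.sum_subset (Finset.subset_univ Aᶜ)
      (fun i _ hi => thetaA_mul_theta_mem n A i (by simpa using hi))]
    exact Finset.sum_congr rfl fun i hi => thetaA_mul_theta n A i (by simpa using hi)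
  rw [Finset.sum_congr rfl step1]
  have hsig : ∑ A ∈ Finset.powersetCard m (Finset.univ : Finset (Fin n)),
      ∑ i ∈ Aᶜ, (-1:ℚ) ^ ((A.filter (fun a => i < a)).card) • thetaA n (insert i A)
      = ∑ x ∈ (Finset.powersetCard m (Finset.univ : Finset (Fin n))).sigma (fun A => Aᶜ),
        (-1:ℚ) ^ ((x.1.filter (fun a => x.2 < a)).card) • thetaA n (insert x.2 x.1) :=
    (Finset.sum_sigma _ _ (fun x : Σ _ : Finset (Fin n), Fin n => (-1:ℚ) ^ ((x.1.filter (fun a => x.2 < a)).card)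
      • thetaA n (insert x.2 x.1))).symm
  rw [hsig]
  have hsig2 : ∑ B ∈ Finset.powersetCard (m+1) (Finset.univ : Finset (Fin n)),
      ∑ i ∈ B, (-1:ℚ) ^ (((B.erase i).filter (fun a => i < a)).card) • thetaA n B
      = ∑ x ∈ (Finset.powersetCard (m+1) (Finset.univ : Finset (Fin n))).sigma (fun B => B),
        (-1:ℚ) ^ (((x.1.erase x.2).filter (fun a => x.2 < a)).card) • thetaA n x.1 :=
    (Finset.sum_sigma _ _ (fun x : Σ _ : Finset (Fin n), Fin n => (-1:ℚ) ^ (((x.1.erase x.2).filter (fun a => x.2 < a)).card)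
      • thetaA n x.1)).symm
  have hbij : ∑ x ∈ (Finset.powersetCard m (Finset.univ : Finset (Fin n))).sigma (fun A => Aᶜ),
      (-1:ℚ) ^ ((x.1.filter (fun a => x.2 < a)).card) • thetaA n (insert x.2 x.1)
      = ∑ x ∈ (Finset.powersetCard (m+1) (Finset.univ : Finset (Fin n))).sigma (fun B => B),
        (-1:ℚ) ^ (((x.1.erase x.2).filter (fun a => x.2 < a)).card) • thetaA n x.1 := by
    apply Finset.sum_nbij' (i := fun x : Σ _ : Finset (Fin n), Fin n => (⟨insert x.2 x.1, x.2⟩ : Σ _ : Finset (Fin n), Fin n))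
      (j := fun x : Σ _ : Finset (Fin n), Fin n => (⟨x.1.erase x.2, x.2⟩ : Σ _ : Finset (Fin n), Fin n))
    · rintro ⟨A, i⟩ hx
      simp only [Finset.mem_sigma, Finset.mem_powersetCard_univ, Finset.mem_compl] at hx
      simp only [Finset.mem_sigma, Finset.mem_powersetCard_univ]
      exact ⟨by rw [Finset.card_insert_of_notMem hx.2, hx.1], Finset.mem_insert_self _ _⟩
    · rintro ⟨B, i⟩ hx
      simp only [Finset.mem_sigma, Finset.mem_powersetCard_univ] at hx
      simp only [Finset.mem_sigma, Finset.mem_powersetCard_univ, Finset.mem_compl]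
      exact ⟨by rw [Finset.card_erase_of_mem hx.2, hx.1]; omega, Finset.notMem_erase _ _⟩
    · rintro ⟨A, i⟩ hx
      simp only [Finset.mem_sigma, Finset.mem_powersetCard_univ, Finset.mem_compl] at hx
      simp [Finset.erase_insert hx.2]
    · rintro ⟨B, i⟩ hx
      simp only [Finset.mem_sigma, Finset.mem_powersetCard_univ] at hx
      simp [Finset.insert_erase hx.2]
    · rintro ⟨A, i⟩ hx
      simp only [Finset.mem_sigma, Finset.mem_powersetCard_univ, Finset.mem_compl] at hx
      simp [Finset.erase_insert hx.2]
  rw [hbij, ← hsig2]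
  have step2 : ∀ B ∈ Finset.powersetCard (m+1) (Finset.univ : Finset (Fin n)),
      ∑ i ∈ B, (-1:ℚ) ^ (((B.erase i).filter (fun a => i < a)).card) • thetaA n B
      = (if Even (m+1) then (0:ℚ) else 1) • thetaA n B := by
    intro B hB
    rw [Finset.mem_powersetCard_univ] at hB
    have : ∀ i ∈ B, (-1:ℚ) ^ (((B.erase i).filter (fun a => i < a)).card) • thetaA n B
        = (-1:ℚ) ^ ((B.filter (fun a => i < a)).card) • thetaA n B := by
      intro i _
      rw [filter_erase_lt]
    rw [Finset.sum_congr rfl this, ← Finset.sum_smul, sign_sum_one, hB]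
  rw [Finset.sum_congr rfl step2, Fq, Finset.smul_sum]

lemma Fq_mul_two (n m : ℕ) :
    Fq n m * Fq n 2 = (((m + 2) / 2 : ℕ) : ℚ) • Fq n (m + 2) := by
  rw [Fq, Fq_two, Finset.sum_mul]
  have step1 : ∀ A ∈ Finset.powersetCard m (Finset.univ : Finset (Fin n)),
      thetaA n A * (∑ p : Fin n, ∑ q ∈ Finset.univ.filter (fun q => p < q),
        theta n p * theta n q)
      = ∑ p ∈ Aᶜ, ∑ q ∈ Aᶜ.filter (fun q => p < q),
          (-1:ℚ) ^ ((A.filter (fun a => p < a)).card + (A.filter (fun a => q < a)).card)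
            • thetaA n (insert q (insert p A)) := by
    intro A _
    rw [Finset.mul_sum]
    have hterm : ∀ p : Fin n, ∀ q : Fin n, p < q → p ∉ A → q ∉ A →
        thetaA n A * (theta n p * theta n q)
        = (-1:ℚ) ^ ((A.filter (fun a => p < a)).card + (A.filter (fun a => q < a)).card)
            • thetaA n (insert q (insert p A)) := by
      intro p q hpq hp hq
      rw [← mul_assoc, thetaA_mul_theta n A p hp, smul_mul_assoc,
        thetaA_mul_theta n (insert p A) q (by simp [hq, ne_of_gt hpq]),
        Finset.filter_insert, if_neg (not_lt.mpr (le_of_lt hpq)), smul_smul, ← pow_add]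
    rw [← Finset.sum_subset (Finset.subset_univ Aᶜ) (fun p _ hp => ?_)]
    · apply Finset.sum_congr rfl
      intro p hp
      rw [Finset.mul_sum]
      rw [← Finset.sum_subset (Finset.filter_subset_filter _ (Finset.subset_univ Aᶜ))
        (fun q hq hq' => ?_)]
      · apply Finset.sum_congr rfl
        intro q hq
        simp only [Finset.mem_filter, Finset.mem_compl] at hp hq
        exact hterm p q hq.2 hp hq.1
      · -- q ∈ univ.filter (p<·), q ∉ Aᶜ.filter (p<·) : q ∈ A
        simp only [Finset.mem_filter, Finset.mem_univ, true_and] at hq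
        simp only [Finset.mem_filter, Finset.mem_compl, not_and, not_not] at hq'
        rw [← mul_assoc, thetaA_mul_theta n A p (by simpa using hp), smul_mul_assoc,
          thetaA_mul_theta_mem n (insert p A) q (Finset.mem_insert_of_mem
            (by by_contra hqA; exact hq' hqA hq)), smul_zero]
    · -- p ∈ A : whole inner sum vanishes
      simp only [Finset.mem_compl, not_not] at hp
      rw [Finset.mul_sum]
      apply Finset.sum_eq_zero
      intro q _
      rw [← mul_assoc, thetaA_mul_theta_mem n A p hp, zero_mul]
  rw [Finset.sum_congr rfl step1]
  -- to sigma
  have hsig : ∑ A ∈ Finset.powersetCard m (Finset.univ : Finset (Fin n)),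
      ∑ p ∈ Aᶜ, ∑ q ∈ Aᶜ.filter (fun q => p < q),
        (-1:ℚ) ^ ((A.filter (fun a => p < a)).card + (A.filter (fun a => q < a)).card)
          • thetaA n (insert q (insert p A))
      = ∑ x ∈ (Finset.powersetCard m (Finset.univ : Finset (Fin n))).sigma
          (fun A => Aᶜ.sigma (fun p => Aᶜ.filter (fun q => p < q))),
        (-1:ℚ) ^ ((x.1.filter (fun a => x.2.1 < a)).card
            + (x.1.filter (fun a => x.2.2 < a)).card)
          • thetaA n (insert x.2.2 (insert x.2.1 x.1)) := by
    rw [Finset.sum_sigma]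
    apply Finset.sum_congr rfl
    intro A _
    rw [Finset.sum_sigma]
  rw [hsig]
  have hsig2 : ∑ x ∈ (Finset.powersetCard (m+2) (Finset.univ : Finset (Fin n))).sigma
        (fun B => B.sigma (fun p => B.filter (fun q => p < q))),
      (-1:ℚ) ^ ((((x.1.erase x.2.1).erase x.2.2).filter (fun a => x.2.1 < a)).card
          + (((x.1.erase x.2.1).erase x.2.2).filter (fun a => x.2.2 < a)).card)
        • thetaA n x.1
      = ∑ B ∈ Finset.powersetCard (m+2) (Finset.univ : Finset (Fin n)),
        ∑ p ∈ B, ∑ q ∈ B.filter (fun q => p < q),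
          (-1:ℚ) ^ ((((B.erase p).erase q).filter (fun a => p < a)).card
              + (((B.erase p).erase q).filter (fun a => q < a)).card)
            • thetaA n B := by
    rw [Finset.sum_sigma]
    apply Finset.sum_congr rfl
    intro B _
    rw [Finset.sum_sigma]
  have hbij : ∑ x ∈ (Finset.powersetCard m (Finset.univ : Finset (Fin n))).sigma
        (fun A => Aᶜ.sigma (fun p => Aᶜ.filter (fun q => p < q))),
      (-1:ℚ) ^ ((x.1.filter (fun a => x.2.1 < a)).card
          + (x.1.filter (fun a => x.2.2 < a)).card)
        • thetaA n (insert x.2.2 (insert x.2.1 x.1))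
      = ∑ x ∈ (Finset.powersetCard (m+2) (Finset.univ : Finset (Fin n))).sigma
          (fun B => B.sigma (fun p => B.filter (fun q => p < q))),
        (-1:ℚ) ^ ((((x.1.erase x.2.1).erase x.2.2).filter (fun a => x.2.1 < a)).card
            + (((x.1.erase x.2.1).erase x.2.2).filter (fun a => x.2.2 < a)).card)
          • thetaA n x.1 := by
    apply Finset.sum_nbij'
      (i := fun x : Σ _ : Finset (Fin n), Σ _ : Fin n, Fin n =>
        (⟨insert x.2.2 (insert x.2.1 x.1), x.2.1, x.2.2⟩ : Σ _ : Finset (Fin n), Σ _ : Fin n, Fin n))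
      (j := fun x : Σ _ : Finset (Fin n), Σ _ : Fin n, Fin n =>
        (⟨(x.1.erase x.2.1).erase x.2.2, x.2.1, x.2.2⟩ : Σ _ : Finset (Fin n), Σ _ : Fin n, Fin n))
    · rintro ⟨A, p, q⟩ hx
      simp only [Finset.mem_sigma, Finset.mem_powersetCard_univ, Finset.mem_compl,
        Finset.mem_filter] at hx
      obtain ⟨hA, hp, hq, hpq⟩ := hx
      have hqp : q ∉ insert p A := by simp [hq, ne_of_gt hpq]
      simp only [Finset.mem_sigma, Finset.mem_powersetCard_univ, Finset.mem_filter]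
      refine ⟨?_, ?_, ?_, hpq⟩
      · rw [Finset.card_insert_of_notMem hqp, Finset.card_insert_of_notMem hp, hA]
      · exact Finset.mem_insert_of_mem (Finset.mem_insert_self _ _)
      · exact Finset.mem_insert_self _ _
    · rintro ⟨B, p, q⟩ hx
      simp only [Finset.mem_sigma, Finset.mem_powersetCard_univ, Finset.mem_filter] at hx
      obtain ⟨hB, hp, hq, hpq⟩ := hx
      simp only [Finset.mem_sigma, Finset.mem_powersetCard_univ, Finset.mem_compl,
        Finset.mem_filter]
      have hqB : q ∈ B.erase p := Finset.mem_erase.mpr ⟨ne_of_gt hpq, hq⟩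
      refine ⟨?_, ?_, ⟨?_, hpq⟩⟩
      · rw [Finset.card_erase_of_mem hqB, Finset.card_erase_of_mem hp, hB]; omega
      · simp [Finset.mem_erase]
      · simp [Finset.mem_erase]
    · rintro ⟨A, p, q⟩ hx
      simp only [Finset.mem_sigma, Finset.mem_powersetCard_univ, Finset.mem_compl,
        Finset.mem_filter] at hx
      obtain ⟨hA, hp, hq, hpq⟩ := hx
      have hqp : q ∉ insert p A := by simp [hq, ne_of_gt hpq]
      have hAeq : ((insert q (insert p A)).erase p).erase q = A := by
        rw [Finset.erase_right_comm, Finset.erase_insert hqp, Finset.erase_insert hp]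
      exact congrArg (fun s => (⟨s, p, q⟩ : Σ _ : Finset (Fin n), Σ _ : Fin n, Fin n)) hAeq
    · rintro ⟨B, p, q⟩ hx
      simp only [Finset.mem_sigma, Finset.mem_powersetCard_univ, Finset.mem_filter] at hx
      obtain ⟨hB, hp, hq, hpq⟩ := hx
      have hBeq : insert q (insert p ((B.erase p).erase q)) = B := by
        rw [Finset.erase_right_comm, Finset.insert_erase
          (Finset.mem_erase.mpr ⟨ne_of_lt hpq, hp⟩), Finset.insert_erase hq]
      exact congrArg (fun s => (⟨s, p, q⟩ : Σ _ : Finset (Fin n), Σ _ : Fin n, Fin n)) hBeq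
    · rintro ⟨A, p, q⟩ hx
      simp only [Finset.mem_sigma, Finset.mem_powersetCard_univ, Finset.mem_compl,
        Finset.mem_filter] at hx
      obtain ⟨hA, hp, hq, hpq⟩ := hx
      have hqp : q ∉ insert p A := by simp [hq, ne_of_gt hpq]
      have hAeq : ((insert q (insert p A)).erase p).erase q = A := by
        rw [Finset.erase_right_comm, Finset.erase_insert hqp, Finset.erase_insert hp]
      simp only [hAeq]
  rw [hbij, hsig2]
  have step2 : ∀ B ∈ Finset.powersetCard (m+2) (Finset.univ : Finset (Fin n)),
      ∑ p ∈ B, ∑ q ∈ B.filter (fun q => p < q),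
        (-1:ℚ) ^ ((((B.erase p).erase q).filter (fun a => p < a)).card
            + (((B.erase p).erase q).filter (fun a => q < a)).card)
          • thetaA n B
      = (((m + 2) / 2 : ℕ) : ℚ) • thetaA n B := by
    intro B hB
    rw [Finset.mem_powersetCard_univ] at hB
    have : ∀ p ∈ B, ∑ q ∈ B.filter (fun q => p < q),
        (-1:ℚ) ^ ((((B.erase p).erase q).filter (fun a => p < a)).card
            + (((B.erase p).erase q).filter (fun a => q < a)).card)
          • thetaA n B
        = (∑ q ∈ B.filter (fun q => p < q),
            (-1:ℚ) ^ ((((B.erase p).erase q).filter (fun a => p < a)).card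
              + (((B.erase p).erase q).filter (fun a => q < a)).card)) • thetaA n B := by
      intro p _
      rw [Finset.sum_smul]
    rw [Finset.sum_congr rfl this, ← Finset.sum_smul, sign_sum_two, hB]
  rw [Finset.sum_congr rfl step2, Fq, Finset.smul_sum]

lemma Fq_two_pow (n k : ℕ) : (Fq n 2) ^ k = (k.factorial : ℚ) • Fq n (2 * k) := by
  induction k with
  | zero => simp [Fq_zero]
  | succ k ih =>
    rw [pow_succ, ih, smul_mul_assoc, Fq_mul_two, smul_smul]
    have h2 : 2 * k + 2 = 2 * (k + 1) := by ring
    have h3 : ((2 * k + 2) / 2 : ℕ) = k + 1 := by omega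
    rw [h3, h2, Nat.factorial_succ]
    push_cast
    ring_nf

lemma Fq_two_pow_mul_one (n k : ℕ) :
    (Fq n 2) ^ k * Fq n 1 = (k.factorial : ℚ) • Fq n (2 * k + 1) := by
  rw [Fq_two_pow, smul_mul_assoc, Fq_mul_one]
  have : ¬ Even (2 * k + 1) := by simp [parity_simps]
  rw [if_neg this, one_smul]

/-- For `n ≥ 2` and each `k ≥ 1`, there are nonzero rationals `a, a'` with
`a • F_{2k} = (F_2)^k` and `a' • F_{2k+1} = (F_2)^k F_1`; consequently the two-sided
ideal generated by `{F_r : 1 ≤ r ≤ n}` equals the one generated by `F_1` and `F_2`. -/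
theorem stmt5 (n : ℕ) (hn : 2 ≤ n) :
    (∀ k : ℕ, 1 ≤ k → ∃ a a' : ℚ, a ≠ 0 ∧ a' ≠ 0 ∧
      a • Fq n (2 * k) = (Fq n 2) ^ k ∧
      a' • Fq n (2 * k + 1) = (Fq n 2) ^ k * Fq n 1) ∧
    TwoSidedIdeal.span {x | ∃ r : ℕ, 1 ≤ r ∧ r ≤ n ∧ x = Fq n r}
      = TwoSidedIdeal.span {Fq n 1, Fq n 2} := by
  constructor
  · intro k _
    refine ⟨(k.factorial : ℚ), (k.factorial : ℚ),
      Nat.cast_ne_zero.mpr k.factorial_ne_zero,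
      Nat.cast_ne_zero.mpr k.factorial_ne_zero,
      (Fq_two_pow n k).symm, (Fq_two_pow_mul_one n k).symm⟩
  · set I := TwoSidedIdeal.span ({Fq n 1, Fq n 2} : Set (ExteriorAlgebra ℚ (Fin n → ℚ)))
    have hF1 : Fq n 1 ∈ I := TwoSidedIdeal.subset_span (Set.mem_insert _ _)
    have hF2 : Fq n 2 ∈ I := TwoSidedIdeal.subset_span (Set.mem_insert_of_mem _ rfl)
    have hsmul : ∀ (c : ℚ) (x : ExteriorAlgebra ℚ (Fin n → ℚ)), x ∈ I → c • x ∈ I := by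
      intro c x hx
      rw [Algebra.smul_def]
      exact I.mul_mem_left _ _ hx
    have hpow : ∀ k : ℕ, 1 ≤ k → (Fq n 2) ^ k ∈ I := by
      intro k hk
      obtain ⟨j, rfl⟩ := Nat.exists_eq_add_of_le hk
      rw [add_comm, pow_succ]
      exact I.mul_mem_left _ _ hF2
    have hmem : ∀ r : ℕ, 1 ≤ r → Fq n r ∈ I := by
      intro r hr
      rcases Nat.even_or_odd r with ⟨k, hk⟩ | ⟨k, hk⟩
      · -- r = 2k, k ≥ 1
        have hk1 : 1 ≤ k := by omega
        have := Fq_two_pow n k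
        have h2k : 2 * k = r := by omega
        rw [h2k] at this
        have : Fq n r = (k.factorial : ℚ)⁻¹ • (Fq n 2) ^ k := by
          rw [this, smul_smul, inv_mul_cancel₀ (Nat.cast_ne_zero.mpr k.factorial_ne_zero),
            one_smul]
        rw [this]
        exact hsmul _ _ (hpow k hk1)
      · -- r = 2k+1
        rcases Nat.eq_or_lt_of_le hr with h1 | h1
        · rw [← h1]; exact hF1
        · have hk1 : 1 ≤ k := by omega
          have := Fq_two_pow_mul_one n k
          have h2k : 2 * k + 1 = r := by omega
          rw [h2k] at this
          have heq : Fq n r = (k.factorial : ℚ)⁻¹ • ((Fq n 2) ^ k * Fq n 1) := by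
            rw [this, smul_smul, inv_mul_cancel₀ (Nat.cast_ne_zero.mpr k.factorial_ne_zero),
              one_smul]
          rw [heq]
          exact hsmul _ _ (I.mul_mem_left _ _ hF1)
    apply le_antisymm
    · intro x hx
      rw [TwoSidedIdeal.mem_span_iff] at hx
      apply hx
      rintro y ⟨r, hr1, hrn, rfl⟩
      exact hmem r hr1
    · intro x hx
      rw [TwoSidedIdeal.mem_span_iff] at hx
      apply hx
      rintro y hy
      rcases hy with rfl | rfl
      · exact TwoSidedIdeal.subset_span ⟨1, le_refl 1, le_trans one_le_two hn, rfl⟩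
      · exact TwoSidedIdeal.subset_span ⟨2, one_le_two, hn, rfl⟩
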